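/- A history sDAG (V,E) is a history if and only if (V,E) is a tree (that is, no node of V is the target of two distinct edges of E) and E contains exactly one edge whose parent node is ρ. -/
import Mathlib


universe u v

/-- A node of a history sDAG: either the universal ancestor (UA) node `ρ`,
or a node carrying a label `ℓ : Y` and a subpartition `U : Set (Set Y)`. -/
inductive HNode (Y : Type u) : Type u
  | ua : HNode Y
  | node : Y → Set (Set Y) → HNode Y

namespace HistorySDAGs

variable {Y : Type u}

/-- `U ∈ Part(Y)`: `U` is a set of pairwise disjoint nonempty (finite) clades with `|U| ≠ 1`. -/
def IsPart (U : Set (Set Y)) : Prop :=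
  (∀ C ∈ U, C ≠ ∅) ∧
  (∀ C₁ ∈ U, ∀ C₂ ∈ U, C₁ ≠ C₂ → Disjoint C₁ C₂) ∧
  (∀ C, U ≠ {C}) ∧
  U.Finite ∧ ∀ C ∈ U, C.Finite

open Classical in
/-- The clade union of a node. -/
noncomputable def cladeUnion : HNode Y → Set Y
  | HNode.ua => ∅
  | HNode.node ℓ U => if U = ∅ then {ℓ} else ⋃₀ U

/-- Reachability via directed edges in `E`. -/
def Reach (E : Set (HNode Y × HNode Y)) (a b : HNode Y) : Prop :=
  Relation.ReflTransGen (fun x y => (x, y) ∈ E) a b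

/-- `(V, E)` is a history sDAG on labels `Y`. -/
structure IsHSDAG (V : Set (HNode Y)) (E : Set (HNode Y × HNode Y)) : Prop where
  ua_mem : HNode.ua ∈ V
  valid : ∀ ℓ U, HNode.node ℓ U ∈ V → IsPart U
  edge_mem : ∀ e ∈ E, e.1 ∈ V ∧ e.2 ∈ V
  reach_ua : ∀ v ∈ V, Reach E HNode.ua v
  no_in_ua : ∀ v : HNode Y, (v, HNode.ua) ∉ E
  edge_clade : ∀ ℓ U v, (HNode.node ℓ U, v) ∈ E → cladeUnion v ∈ U
  clade_cov : ∀ ℓ U, HNode.node ℓ U ∈ V → ∀ C ∈ U,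
      ∃ v, (HNode.node ℓ U, v) ∈ E ∧ cladeUnion v = C

/-- Every node-clade pair of `V` has exactly one descendant edge in `E`. -/
def UniqueDesc (V : Set (HNode Y)) (E : Set (HNode Y × HNode Y)) : Prop :=
  ∀ ℓ U, HNode.node ℓ U ∈ V → ∀ C ∈ U,
    ∃! vc, (HNode.node ℓ U, vc) ∈ E ∧ cladeUnion vc = C

/-- `(V, E)` is a history: a history sDAG in which `ρ` has exactly one child and
each node-clade pair has exactly one descendant edge. -/
def IsHistory (V : Set (HNode Y)) (E : Set (HNode Y × HNode Y)) : Prop :=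
  IsHSDAG V E ∧ (∃! v, (HNode.ua, v) ∈ E) ∧ UniqueDesc V E

/-- `(Vs, Es)` is a subhistory of `(V, E)` with root node `vr`. -/
structure IsSubhistoryRooted (V : Set (HNode Y)) (E : Set (HNode Y × HNode Y))
    (Vs : Set (HNode Y)) (Es : Set (HNode Y × HNode Y)) (vr : HNode Y) : Prop where
  subV : Vs ⊆ V
  subE : Es ⊆ E
  ua_not_mem : HNode.ua ∉ Vs
  edge_mem : ∀ e ∈ Es, e.1 ∈ Vs ∧ e.2 ∈ Vs
  root_mem : vr ∈ Vs
  reach_root : ∀ v ∈ Vs, Reach Es vr v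
  unique_desc : ∀ ℓ U, HNode.node ℓ U ∈ Vs → ∀ C ∈ U,
      ∃! vc, (HNode.node ℓ U, vc) ∈ Es ∧ cladeUnion vc = C

/-- `(Vs, Es)` is a subhistory of `(V, E)`. -/
def IsSubhistory (V : Set (HNode Y)) (E : Set (HNode Y × HNode Y))
    (Vs : Set (HNode Y)) (Es : Set (HNode Y × HNode Y)) : Prop :=
  ∃ vr, IsSubhistoryRooted V E Vs Es vr

/-- `(Vt, Et)` is a history in (a trim of) the history sDAG `(V, E)`. -/
def HistoryIn (V : Set (HNode Y)) (E : Set (HNode Y × HNode Y))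
    (Vt : Set (HNode Y)) (Et : Set (HNode Y × HNode Y)) : Prop :=
  Vt ⊆ V ∧ Et ⊆ E ∧ IsHistory Vt Et

/-- The set of labels of leaf nodes in a node set. -/
def leafLabels (Vt : Set (HNode Y)) : Set Y := {ℓ | HNode.node ℓ ∅ ∈ Vt}

/-- A candidate history/graph: a pair of a node set and an edge set. -/
abbrev Hist (Y : Type u) := Set (HNode Y) × Set (HNode Y × HNode Y)

/-- The node set of the history sDAG constructed from the collection `T`. -/
def unionV (T : Set (Hist Y)) : Set (HNode Y) := ⋃ t ∈ T, t.1

/-- The edge set of the history sDAG constructed from the collection `T`. -/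
def unionE (T : Set (Hist Y)) : Set (HNode Y × HNode Y) := ⋃ t ∈ T, t.2

/-- The node set of the complete history sDAG on labels `Y`. -/
def completeV (Y : Type u) : Set (HNode Y) :=
  {v | v = HNode.ua ∨ ∃ ℓ U, v = HNode.node ℓ U ∧ IsPart U}

/-- The edge set of the complete history sDAG on labels `Y`. -/
def completeE (Y : Type u) : Set (HNode Y × HNode Y) :=
  {e | e.1 ∈ completeV Y ∧ e.2 ∈ completeV Y ∧ e.2 ≠ HNode.ua ∧
    (e.1 = HNode.ua ∨ ∃ ℓ U, e.1 = HNode.node ℓ U ∧ cladeUnion e.2 ∈ U)}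

variable {W : Type v}

/-- The weight `g_f` of a subgraph with edge set `Es`: the sum of `f` over all edges. -/
noncomputable def gweight [AddCommMonoid W] (f : HNode Y × HNode Y → W)
    (Es : Set (HNode Y × HNode Y)) : W := ∑ᶠ e ∈ Es, f e

/-- The order is total on the subset `S` of `W`. -/
def TotalOn [PartialOrder W] (S : Set W) : Prop := ∀ a ∈ S, ∀ b ∈ S, a ≤ b ∨ b ≤ a

/-- The order respects addition on the subset `S` of `W`. -/
def RespectsAdd [AddCommMonoid W] [PartialOrder W] (S : Set W) : Prop :=
  ∀ a ∈ S, ∀ b ∈ S, ∀ c : W, a < b ↔ a + c < b + c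

/-- Weights of subhistories of `(V, E)` rooted at `v`. -/
def subWeights [AddCommMonoid W] (f : HNode Y × HNode Y → W)
    (V : Set (HNode Y)) (E : Set (HNode Y × HNode Y)) (v : HNode Y) : Set W :=
  {w | ∃ Vs Es, IsSubhistoryRooted V E Vs Es v ∧ w = gweight f Es}

/-- Weights of augmented subhistories below the node-clade pair `(v, C)`. -/
def augWeights [AddCommMonoid W] (f : HNode Y × HNode Y → W)
    (V : Set (HNode Y)) (E : Set (HNode Y × HNode Y)) (v : HNode Y) (C : Set Y) : Set W :=
  {w | ∃ vc Vs Es, (v, vc) ∈ E ∧ cladeUnion vc = C ∧ IsSubhistoryRooted V E Vs Es vc ∧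
    w = gweight f (insert (v, vc) Es)}

/-- Weights of histories in `(V, E)`. -/
def historyWeights [AddCommMonoid W] (f : HNode Y × HNode Y → W)
    (V : Set (HNode Y)) (E : Set (HNode Y × HNode Y)) : Set W :=
  {w | ∃ Vt Et, HistoryIn V E Vt Et ∧ w = gweight f Et}

/-- `W` is clade-ordered with respect to `f` and `(V, E)`. -/
def CladeOrdered [AddCommMonoid W] [PartialOrder W] (f : HNode Y × HNode Y → W)
    (V : Set (HNode Y)) (E : Set (HNode Y × HNode Y)) : Prop :=
  (∀ v ∈ V, v ≠ HNode.ua →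
      TotalOn (subWeights f V E v) ∧ RespectsAdd (subWeights f V E v)) ∧
  (∀ ℓ U, HNode.node ℓ U ∈ V → ∀ C ∈ U,
      TotalOn (augWeights f V E (HNode.node ℓ U) C) ∧
      RespectsAdd (augWeights f V E (HNode.node ℓ U) C)) ∧
  TotalOn (historyWeights f V E)

/-- The minimum-weight histories in `(V, E)` with respect to `g_f`. -/
def minHistories [AddCommMonoid W] [PartialOrder W] (f : HNode Y × HNode Y → W)
    (V : Set (HNode Y)) (E : Set (HNode Y × HNode Y)) : Set (Hist Y) :=
  {t | HistoryIn V E t.1 t.2 ∧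
    ∀ t' : Hist Y, HistoryIn V E t'.1 t'.2 → gweight f t.2 ≤ gweight f t'.2}

open Classical in
/-- The map `q` collapsing the edge `(vp, vc)`, sending both `vp` and `vc` to `vp'`. -/
noncomputable def collapseMap (vp vc vp' : HNode Y) (v : HNode Y) : HNode Y :=
  if v = vp ∨ v = vc then vp' else v

/-- The history obtained by collapsing the edge `(vp, vc)` (into `vp'`) in `t`. -/
noncomputable def collapseEdgeHist (vp vc vp' : HNode Y) (t : Hist Y) : Hist Y :=
  (collapseMap vp vc vp' '' t.1,
   (fun e : HNode Y × HNode Y => (collapseMap vp vc vp' e.1, collapseMap vp vc vp' e.2)) ''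
     (t.2 \ {(vp, vc)}))

/-- The new parent node `(ℓ_p, (U_p ∪ U_c) \ {CU(v_c)})` formed when collapsing an edge. -/
noncomputable def newParent : HNode Y → HNode Y → HNode Y
  | HNode.node ℓp Up, HNode.node ℓc Uc =>
      HNode.node ℓp ((Up ∪ Uc) \ {cladeUnion (HNode.node ℓc Uc)})
  | v, _ => v

/-- `t'` results from `t` by collapsing one label-collapsible edge. -/
def LabelCollapseStep (t t' : Hist Y) : Prop :=
  ∃ ℓ Up Uc, (HNode.node ℓ Up, HNode.node ℓ Uc) ∈ t.2 ∧ Uc ≠ ∅ ∧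
    t' = collapseEdgeHist (HNode.node ℓ Up) (HNode.node ℓ Uc)
        (newParent (HNode.node ℓ Up) (HNode.node ℓ Uc)) t

/-- `t` is label-collapsed: it has no label-collapsible edge. -/
def LabelCollapsed (t : Hist Y) : Prop :=
  ∀ ℓ Up Uc, (HNode.node ℓ Up, HNode.node ℓ Uc) ∈ t.2 → Uc = ∅

/-- `(vp, vc)` is a label-collapsible edge of `G`. -/
def LabelCollapsibleEdge (G : Hist Y) (vp vc : HNode Y) : Prop :=
  (vp, vc) ∈ G.2 ∧ ∃ ℓ Up Uc, vp = HNode.node ℓ Up ∧ vc = HNode.node ℓ Uc ∧ Uc ≠ ∅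

/-- `T` is a label-collapsible edge cover of `G`. -/
def LabelCollapsibleEdgeCover (G : Hist Y) (T : Set (Hist Y)) : Prop :=
  (∀ t ∈ T, HistoryIn G.1 G.2 t.1 t.2) ∧
  (∀ e ∈ G.2, ∃ t ∈ T, e ∈ t.2) ∧
  (∀ vp vc, LabelCollapsibleEdge G vp vc →
    ∀ Vs Es, IsSubhistory G.1 G.2 Vs Es → (vp, vc) ∈ Es →
      ∃ t ∈ T, Vs ⊆ t.1 ∧ Es ⊆ t.2)

open Classical in
/-- Collapsing the edge `(vp, vc)` in the history sDAG `G`, via `E⁺`, `R`, `E⁻`, `E'`, `V'`. -/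
noncomputable def collapseDAGEdge (vp vc : HNode Y) (G : Hist Y) : Hist Y :=
  let vp' := newParent vp vc
  let Eplus : Set (HNode Y × HNode Y) :=
    (G.2 ∪ {e | ∃ v, e = (v, vp') ∧ (v, vp) ∈ G.2}
        ∪ {e | ∃ v, e = (vp', v) ∧ (vp, v) ∈ G.2 ∧ cladeUnion v ≠ cladeUnion vc}
        ∪ {e | ∃ v, e = (vp', v) ∧ (vc, v) ∈ G.2}) \ {(vp, vc)}
  let R : Set (HNode Y × HNode Y) :=
    if ∃ v, (vp, v) ∈ Eplus ∧ cladeUnion v = cladeUnion vc then ∅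
    else {e ∈ Eplus | e.2 = vp}
  let Eminus := Eplus \ R
  let E' := {e ∈ Eminus | Reach Eminus HNode.ua e.1}
  ({v | ∃ e ∈ E', v = e.1 ∨ v = e.2}, E')

/-- `t'` is obtained from `t` by a subhistory swap, replacing a subhistory of `t` by a
conforming subhistory of some history in `S`. -/
def SwapStepUsing (S : Set (Hist Y)) (t t' : Hist Y) : Prop :=
  ∃ t₂ ∈ S, ∃ Vs' Es' vr' vp,
    IsSubhistoryRooted t₂.1 t₂.2 Vs' Es' vr' ∧ (vp, vr') ∈ t₂.2 ∧
    ∃ Vs Es vr, IsSubhistoryRooted t.1 t.2 Vs Es vr ∧ (vp, vr) ∈ t.2 ∧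
      leafLabels Vs = leafLabels Vs' ∧
      t' = ((t.1 \ Vs) ∪ Vs', (t.2 \ (Es ∪ {(vp, vr)})) ∪ (Es' ∪ {(vp, vr')}))

/-- Leaves of an abstract rooted graph. -/
def IsLeafIn {α : Type v} (nodes : Set α) (edges : Set (α × α)) (x : α) : Prop :=
  x ∈ nodes ∧ ∀ c, (x, c) ∉ edges

/-- Reachability via directed edges in an abstract graph. -/
def GReach {α : Type v} (edges : Set (α × α)) (a b : α) : Prop :=
  Relation.ReflTransGen (fun x y => (x, y) ∈ edges) a b

/-- An (internally) labeled tree: a rooted multifurcating tree with no unifurcations,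
with node labels in `Y` that are injective on leaves. -/
structure IsLabeledTree {α : Type v} (nodes : Set α) (edges : Set (α × α))
    (root : α) (lab : α → Y) : Prop where
  root_mem : root ∈ nodes
  edge_mem : ∀ e ∈ edges, e.1 ∈ nodes ∧ e.2 ∈ nodes
  reach_root : ∀ x ∈ nodes, GReach edges root x
  unique_parent : ∀ x a b, (a, x) ∈ edges → (b, x) ∈ edges → a = b
  no_parent_root : ∀ a, (a, root) ∉ edges
  acyclic : ∀ x, ¬ Relation.TransGen (fun a b => (a, b) ∈ edges) x x
  no_unif : ∀ x ∈ nodes, ¬ (∃! c, (x, c) ∈ edges)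
  leaf_inj : ∀ x y, IsLeafIn nodes edges x → IsLeafIn nodes edges y → lab x = lab y → x = y
  finite : nodes.Finite

/-- The set `C_w` of leaf labels below a node `w` of an abstract labeled tree. -/
def leavesBelow {α : Type v} (nodes : Set α) (edges : Set (α × α)) (lab : α → Y) (w : α) :
    Set Y :=
  {y | ∃ u, IsLeafIn nodes edges u ∧ GReach edges w u ∧ y = lab u}

/-- The history sDAG node `v_w` associated to a node `w` of a labeled tree. -/
def treeNodeOf {α : Type v} (nodes : Set α) (edges : Set (α × α)) (lab : α → Y) (w : α) :
    HNode Y :=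
  HNode.node (lab w) {C | ∃ w', (w, w') ∈ edges ∧ C = leavesBelow nodes edges lab w'}

/-- The node set `V_t` of the history associated to a labeled tree. -/
def treeToHistV {α : Type v} (nodes : Set α) (edges : Set (α × α)) (lab : α → Y) :
    Set (HNode Y) :=
  insert HNode.ua (treeNodeOf nodes edges lab '' nodes)

/-- The edge set `E_t` of the history associated to a labeled tree. -/
def treeToHistE {α : Type v} (nodes : Set α) (edges : Set (α × α)) (root : α) (lab : α → Y) :
    Set (HNode Y × HNode Y) :=
  insert (HNode.ua, treeNodeOf nodes edges lab root)
    {e | ∃ w₁ w₂, (w₁, w₂) ∈ edges ∧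
      e = (treeNodeOf nodes edges lab w₁, treeNodeOf nodes edges lab w₂)}
section AuxLemmas

variable {V : Set (HNode Y)} {E : Set (HNode Y × HNode Y)}

lemma mem_cu_of_clade {ℓ : Y} {U : Set (Set Y)} {C : Set Y} (hC : C ∈ U) :
    C ⊆ cladeUnion (HNode.node ℓ U) := by
  have hU : U ≠ ∅ := by rintro rfl; exact hC
  simp only [cladeUnion, if_neg hU]
  exact Set.subset_sUnion_of_mem hC

lemma target_ne_ua (h : IsHSDAG V E) {w v : HNode Y} (he : (w, v) ∈ E) : v ≠ HNode.ua := by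
  rintro rfl; exact h.no_in_ua w he

lemma cu_sub (h : IsHSDAG V E) {w v : HNode Y} (he : (w, v) ∈ E) (hw : w ≠ HNode.ua) :
    cladeUnion v ⊆ cladeUnion w := by
  cases w with
  | ua => exact absurd rfl hw
  | node ℓ U => exact mem_cu_of_clade (h.edge_clade ℓ U v he)

lemma cu_ssub (h : IsHSDAG V E) {w v : HNode Y} (he : (w, v) ∈ E) (hw : w ≠ HNode.ua) :
    cladeUnion v ⊂ cladeUnion w := by
  cases w with
  | ua => exact absurd rfl hw
  | node ℓ U =>
    have hwV : HNode.node ℓ U ∈ V := (h.edge_mem _ he).1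
    have part := h.valid ℓ U hwV
    have hC : cladeUnion v ∈ U := h.edge_clade ℓ U v he
    obtain ⟨C', hC', hne⟩ : ∃ C' ∈ U, C' ≠ cladeUnion v := by
      by_contra hcon
      push_neg at hcon
      exact part.2.2.1 (cladeUnion v) (Set.eq_singleton_iff_unique_mem.2 ⟨hC, hcon⟩)
    obtain ⟨y, hy⟩ : C'.Nonempty := Set.nonempty_iff_ne_empty.2 (part.1 C' hC')
    refine ⟨mem_cu_of_clade hC, fun hsup => ?_⟩
    have hyw : y ∈ cladeUnion (HNode.node ℓ U) := mem_cu_of_clade hC' hy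
    exact Set.disjoint_left.mp (part.2.1 C' hC' (cladeUnion v) hC hne) hy (hsup hyw)

lemma reach_ne_ua (h : IsHSDAG V E) {u v : HNode Y} (hr : Reach E u v)
    (hu : u ≠ HNode.ua) : v ≠ HNode.ua := by
  induction hr with
  | refl => exact hu
  | tail _ e _ => exact target_ne_ua h e

lemma cu_mono (h : IsHSDAG V E) {u v : HNode Y} (hr : Reach E u v) (hu : u ≠ HNode.ua) :
    cladeUnion v ⊆ cladeUnion u := by
  induction hr with
  | refl => exact subset_rfl
  | tail h1 e ih => exact (cu_sub h e (reach_ne_ua h h1 hu)).trans ih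

lemma cu_finite (h : IsHSDAG V E) {v : HNode Y} (hv : v ∈ V) (hne : v ≠ HNode.ua) :
    (cladeUnion v).Finite := by
  cases v with
  | ua => exact absurd rfl hne
  | node ℓ U =>
    have part := h.valid ℓ U hv
    by_cases hU : U = ∅
    · simp [cladeUnion, hU]
    · simp only [cladeUnion, if_neg hU]
      exact Set.Finite.sUnion part.2.2.2.1 part.2.2.2.2

lemma cu_nonempty (h : IsHSDAG V E) {w v : HNode Y} (he : (w, v) ∈ E) (hw : w ≠ HNode.ua) :
    (cladeUnion v).Nonempty := by
  cases w with
  | ua => exact absurd rfl hw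
  | node ℓ U =>
    have part := h.valid ℓ U (h.edge_mem _ he).1
    exact Set.nonempty_iff_ne_empty.2 (part.1 _ (h.edge_clade ℓ U v he))

/-- Contradiction in the case `r → x` directly and `r → c' ⟶* b → x`. -/
lemma case_eq_aux (h : IsHSDAG V E) (hud : UniqueDesc V E) {r b x c' : HNode Y}
    (hrV : r ∈ V) (hr : r ≠ HNode.ua) (hrx : (r, x) ∈ E) (hbx : (b, x) ∈ E)
    (hrc : (r, c') ∈ E) (hcb : Reach E c' b) : False := by
  have hc' : c' ≠ HNode.ua := target_ne_ua h hrc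
  have hb : b ≠ HNode.ua := reach_ne_ua h hcb hc'
  have hbV : b ∈ V := (h.edge_mem _ hbx).1
  have hxb : cladeUnion x ⊆ cladeUnion b := cu_sub h hbx hb
  have hxc : cladeUnion x ⊆ cladeUnion c' := hxb.trans (cu_mono h hcb hc')
  cases r with
  | ua => exact hr rfl
  | node ℓ U =>
    have part := h.valid ℓ U hrV
    have hCx : cladeUnion x ∈ U := h.edge_clade ℓ U x hrx
    have hCc : cladeUnion c' ∈ U := h.edge_clade ℓ U c' hrc
    obtain ⟨y, hy⟩ : (cladeUnion x).Nonempty := cu_nonempty h hbx hb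
    have heq : cladeUnion c' = cladeUnion x := by
      by_contra hne
      exact Set.disjoint_left.mp (part.2.1 _ hCc _ hCx hne) (hxc hy) hy
    have hxc' : x = c' :=
      (hud ℓ U hrV (cladeUnion x) hCx).unique ⟨hrx, rfl⟩ ⟨hrc, heq⟩
    subst hxc'
    exact (cu_ssub h hbx hb).not_subset (cu_mono h hcb hc')
lemma hist_tree_aux (h : IsHSDAG V E) (hud : UniqueDesc V E) :
    ∀ n : ℕ, ∀ r : HNode Y, r ∈ V → r ≠ HNode.ua → (cladeUnion r).ncard ≤ n →
      ∀ a b x : HNode Y, Reach E r a → Reach E r b → (a, x) ∈ E → (b, x) ∈ E → a = b := by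
  intro n
  induction n using Nat.strong_induction_on with
  | _ n ih =>
    intro r hrV hr hn a b x hra hrb hax hbx
    rcases hra.cases_head with rfl | ⟨c, hrc, hca⟩
    · rcases hrb.cases_head with rfl | ⟨c', hrc', hcb⟩
      · rfl
      · exact (case_eq_aux h hud hrV hr hax hbx hrc' hcb).elim
    · rcases hrb.cases_head with rfl | ⟨c', hrc', hcb⟩
      · exact (case_eq_aux h hud hrV hr hbx hax hrc hca).elim
      · have hcne : c ≠ HNode.ua := target_ne_ua h hrc
        have hcne' : c' ≠ HNode.ua := target_ne_ua h hrc'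
        have ha : a ≠ HNode.ua := reach_ne_ua h hca hcne
        have hxa : cladeUnion x ⊆ cladeUnion a := cu_sub h hax ha
        have hxc : cladeUnion x ⊆ cladeUnion c := hxa.trans (cu_mono h hca hcne)
        have hb : b ≠ HNode.ua := reach_ne_ua h hcb hcne'
        have hxc' : cladeUnion x ⊆ cladeUnion c' :=
          (cu_sub h hbx hb).trans (cu_mono h hcb hcne')
        obtain ⟨y, hy⟩ : (cladeUnion x).Nonempty := cu_nonempty h hax ha
        have hcc : c = c' := by
          cases r with
          | ua => exact absurd rfl hr
          | node ℓ U =>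
            have part := h.valid ℓ U hrV
            have hCc : cladeUnion c ∈ U := h.edge_clade ℓ U c hrc
            have hCc' : cladeUnion c' ∈ U := h.edge_clade ℓ U c' hrc'
            have heq : cladeUnion c = cladeUnion c' := by
              by_contra hne
              exact Set.disjoint_left.mp (part.2.1 _ hCc _ hCc' hne) (hxc hy) (hxc' hy)
            exact (hud ℓ U hrV (cladeUnion c) hCc).unique ⟨hrc, rfl⟩ ⟨hrc', heq.symm⟩
        subst hcc
        have hlt : (cladeUnion c).ncard < n :=
          lt_of_lt_of_le (Set.ncard_lt_ncard (cu_ssub h hrc hr) (cu_finite h hrV hr)) hn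
        exact ih _ hlt c (h.edge_mem _ hrc).2 hcne le_rfl a b x hca hcb hax hbx

lemma leaf_reach (h : IsHSDAG V E) :
    ∀ n : ℕ, ∀ v : HNode Y, v ∈ V → v ≠ HNode.ua → (cladeUnion v).ncard ≤ n →
      ∀ y ∈ cladeUnion v, Reach E v (HNode.node y ∅) := by
  intro n
  induction n using Nat.strong_induction_on with
  | _ n ih =>
    intro v hvV hv hn y hy
    cases v with
    | ua => exact absurd rfl hv
    | node ℓ U =>
      by_cases hU : U = ∅
      · subst hU
        have : y = ℓ := by simpa [cladeUnion] using hy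
        subst this
        exact Relation.ReflTransGen.refl
      · simp only [cladeUnion, if_neg hU] at hy
        obtain ⟨C, hC, hyC⟩ := hy
        obtain ⟨vc, hvc, hcu⟩ := h.clade_cov ℓ U hvV C hC
        have hvcne : vc ≠ HNode.ua := target_ne_ua h hvc
        have hlt : (cladeUnion vc).ncard < n :=
          lt_of_lt_of_le (Set.ncard_lt_ncard (cu_ssub h hvc hv) (cu_finite h hvV hv)) hn
        exact Relation.ReflTransGen.head hvc
          (ih _ hlt vc (h.edge_mem _ hvc).2 hvcne le_rfl y (by rw [hcu]; exact hyC))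

lemma confluence (htree : ∀ x a b : HNode Y, (a, x) ∈ E → (b, x) ∈ E → a = b)
    {a b w : HNode Y} (h1 : Reach E a w) (h2 : Reach E b w) :
    Reach E a b ∨ Reach E b a := by
  revert h2
  induction h1 with
  | refl => exact fun h2 => Or.inr h2
  | tail h1' e ih =>
    intro h2
    rcases h2.cases_tail with rfl | ⟨u, hbu, huw⟩
    · exact Or.inl (h1'.tail e)
    · have : u = _ := htree _ _ _ huw e
      subst this
      exact ih hbu

lemma not_reach_of_cu_eq (h : IsHSDAG V E) {v1 v2 : HNode Y} (hne : v1 ≠ v2)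
    (hcu : cladeUnion v1 = cladeUnion v2) (h1 : v1 ≠ HNode.ua) : ¬ Reach E v1 v2 := by
  intro hr
  rcases hr.cases_head with rfl | ⟨c, hc, hcr⟩
  · exact hne rfl
  · have hmono : cladeUnion v2 ⊆ cladeUnion c := cu_mono h hcr (target_ne_ua h hc)
    exact (cu_ssub h hc h1).not_subset (by rw [hcu]; exact hmono)

end AuxLemmas

/-- Lemma `historyaltdef`: a history sDAG is a history iff it is a tree
(no node is the target of two distinct edges) and exactly one edge descends from `ρ`. -/
theorem isHistory_iff_tree_and_unique_root_edge
    (V : Set (HNode Y)) (E : Set (HNode Y × HNode Y)) (h : IsHSDAG V E) :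
    IsHistory V E ↔
      ((∀ x a b : HNode Y, (a, x) ∈ E → (b, x) ∈ E → a = b) ∧
        (∃! v, (HNode.ua, v) ∈ E)) := by
  constructor
  · rintro ⟨hh, hroot, hud⟩
    refine ⟨?_, hroot⟩
    intro x a b hax hbx
    obtain ⟨v0, hv0, hv0u⟩ := hroot
    by_cases ha : a = HNode.ua <;> by_cases hb : b = HNode.ua
    · rw [ha, hb]
    · -- a = ρ, b ≠ ρ
      exfalso
      subst ha
      have hx0 : x = v0 := hv0u x hax
      have hbV : b ∈ V := (h.edge_mem _ hbx).1
      rcases (h.reach_ua b hbV).cases_head with rfl | ⟨c, hc, hcb⟩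
      · exact hb rfl
      · have hcx : c = x := by rw [hx0]; exact hv0u c hc
        subst hcx
        have hxne : c ≠ HNode.ua := target_ne_ua h hc
        exact (cu_ssub h hbx hb).not_subset (cu_mono h hcb hxne)
    · -- b = ρ, a ≠ ρ
      exfalso
      subst hb
      have hx0 : x = v0 := hv0u x hbx
      have haV : a ∈ V := (h.edge_mem _ hax).1
      rcases (h.reach_ua a haV).cases_head with rfl | ⟨c, hc, hca⟩
      · exact ha rfl
      · have hcx : c = x := by rw [hx0]; exact hv0u c hc
        subst hcx
        have hxne : c ≠ HNode.ua := target_ne_ua h hc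
        exact (cu_ssub h hax ha).not_subset (cu_mono h hca hxne)
    · -- a ≠ ρ, b ≠ ρ
      have haV : a ∈ V := (h.edge_mem _ hax).1
      have hbV : b ∈ V := (h.edge_mem _ hbx).1
      rcases (h.reach_ua a haV).cases_head with rfl | ⟨c, hc, hca⟩
      · exact absurd rfl ha
      rcases (h.reach_ua b hbV).cases_head with rfl | ⟨c', hc', hcb⟩
      · exact absurd rfl hb
      have hcc : c' = c := by rw [hv0u c' hc', hv0u c hc]
      subst hcc
      have hcne : c' ≠ HNode.ua := target_ne_ua h hc
      exact hist_tree_aux h hud (cladeUnion c').ncard c' (h.edge_mem _ hc).2 hcne le_rfl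
        a b x hca hcb hax hbx
  · rintro ⟨htree, hroot⟩
    refine ⟨h, hroot, ?_⟩
    intro ℓ U hmem C hC
    obtain ⟨vc, hvc, hcu⟩ := h.clade_cov ℓ U hmem C hC
    refine ⟨vc, ⟨hvc, hcu⟩, ?_⟩
    rintro vc' ⟨hvc', hcu'⟩
    by_contra hne
    have part := h.valid ℓ U hmem
    obtain ⟨y, hy⟩ : C.Nonempty := Set.nonempty_iff_ne_empty.2 (part.1 C hC)
    have hvcne : vc ≠ HNode.ua := target_ne_ua h hvc
    have hvcne' : vc' ≠ HNode.ua := target_ne_ua h hvc'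
    have hvcV : vc ∈ V := (h.edge_mem _ hvc).2
    have hvcV' : vc' ∈ V := (h.edge_mem _ hvc').2
    have hr1 : Reach E vc (HNode.node y ∅) :=
      leaf_reach h _ vc hvcV hvcne le_rfl y (by rw [hcu]; exact hy)
    have hr2 : Reach E vc' (HNode.node y ∅) :=
      leaf_reach h _ vc' hvcV' hvcne' le_rfl y (by rw [hcu']; exact hy)
    have hcueq : cladeUnion vc' = cladeUnion vc := by rw [hcu, hcu']
    rcases confluence htree hr1 hr2 with hr | hr
    · exact not_reach_of_cu_eq h (fun e => hne e.symm) hcueq.symm hvcne hr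
    · exact not_reach_of_cu_eq h hne hcueq hvcne' hr

end HistorySDAGs
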